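/- arXiv:1412.2642 — 4 statements merged into one kernel-verified Lean document; each statement's English description precedes it below -/
import Mathlib

section
/- For every c in the open interval (-1,1) and every real number λ, one has P_c(λ) = (3/2)·(1-λ)² - c²·λ + G(c) ≥ 0; that is, the polynomial function λ ↦ P_c(λ) is nonnegative on all of ℝ. -/
open Real Set

private lemma gDeriv (x : ℝ) (hx : x ∈ Set.Ioo (-1 : ℝ) 1) :
    HasDerivAt (fun x : ℝ => Real.log (1 + x) - Real.log (1 - x) - 2 * x - 2 / 3 * x ^ 3)
      (1 / (1 + x) + 1 / (1 - x) - 2 - 2 * x ^ 2) x := by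
  obtain ⟨h1, h2⟩ := hx
  have hp : (1 : ℝ) + x ≠ 0 := by linarith
  have hm : (1 : ℝ) - x ≠ 0 := by linarith
  have d1 : HasDerivAt (fun x : ℝ => Real.log (1 + x)) (1 / (1 + x)) x := by
    have := (Real.hasDerivAt_log hp).comp x ((hasDerivAt_id x).const_add 1)
    simpa [one_div, Function.comp_def] using this
  have d2 : HasDerivAt (fun x : ℝ => Real.log (1 - x)) (-(1 / (1 - x))) x := by
    have h := ((hasDerivAt_id x).const_add 1 |>.neg)
    have h' : HasDerivAt (fun x : ℝ => 1 - x) (-1) x := by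
      simpa [Pi.sub_def] using (hasDerivAt_const x (1:ℝ)).sub (hasDerivAt_id x)
    have := (Real.hasDerivAt_log hm).comp x h'
    simpa [one_div, Function.comp_def] using this
  have d3 : HasDerivAt (fun x : ℝ => 2 * x) 2 x := by
    simpa using (hasDerivAt_id x).const_mul 2
  have d4 : HasDerivAt (fun x : ℝ => 2 / 3 * x ^ 3) (2 * x ^ 2) x := by
    have := (hasDerivAt_pow 3 x).const_mul (2 / 3 : ℝ)
    refine this.congr_deriv ?_
    ring
  have := ((d1.sub d2).sub d3).sub d4
  refine this.congr_deriv ?_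
  ring

private lemma fDeriv (x : ℝ) (hx : x ∈ Set.Ioo (-1 : ℝ) 1) :
    HasDerivAt (fun x : ℝ => (1 + x) * Real.log (1 + x) + (1 - x) * Real.log (1 - x)
      - x ^ 2 - x ^ 4 / 6)
      (Real.log (1 + x) - Real.log (1 - x) - 2 * x - 2 / 3 * x ^ 3) x := by
  obtain ⟨h1, h2⟩ := hx
  have hp : (1 : ℝ) + x ≠ 0 := by linarith
  have hm : (1 : ℝ) - x ≠ 0 := by linarith
  have d1 : HasDerivAt (fun x : ℝ => Real.log (1 + x)) (1 / (1 + x)) x := by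
    have := (Real.hasDerivAt_log hp).comp x ((hasDerivAt_id x).const_add 1)
    simpa [one_div, Function.comp_def] using this
  have d2 : HasDerivAt (fun x : ℝ => Real.log (1 - x)) (-(1 / (1 - x))) x := by
    have h' : HasDerivAt (fun x : ℝ => 1 - x) (-1) x := by
      simpa [Pi.sub_def] using (hasDerivAt_const x (1:ℝ)).sub (hasDerivAt_id x)
    have := (Real.hasDerivAt_log hm).comp x h'
    simpa [one_div, Function.comp_def] using this
  have dp : HasDerivAt (fun x : ℝ => 1 + x) 1 x := (hasDerivAt_id x).const_add 1
  have dm : HasDerivAt (fun x : ℝ => 1 - x) (-1) x := by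
    simpa [Pi.sub_def] using (hasDerivAt_const x (1:ℝ)).sub (hasDerivAt_id x)
  have t1 := dp.mul d1
  have t2 := dm.mul d2
  have t3 : HasDerivAt (fun x : ℝ => x ^ 2) (2 * x) x := by
    simpa using hasDerivAt_pow 2 x
  have t4 : HasDerivAt (fun x : ℝ => x ^ 4 / 6) (4 * x ^ 3 / 6) x := by
    simpa using (hasDerivAt_pow 4 x).div_const 6
  have := ((t1.add t2).sub t3).sub t4
  refine this.congr_deriv ?_
  field_simp
  ring

private lemma key (c : ℝ) (h0 : 0 ≤ c) (h1 : c < 1) :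
    c ^ 2 + c ^ 4 / 6 ≤ (1 + c) * Real.log (1 + c) + (1 - c) * Real.log (1 - c) := by
  set g : ℝ → ℝ := fun x => Real.log (1 + x) - Real.log (1 - x) - 2 * x - 2 / 3 * x ^ 3 with hg
  set f : ℝ → ℝ := fun x => (1 + x) * Real.log (1 + x) + (1 - x) * Real.log (1 - x)
      - x ^ 2 - x ^ 4 / 6 with hf
  have hsub : Set.Icc (0 : ℝ) c ⊆ Set.Ioo (-1 : ℝ) 1 := fun x hx =>
    ⟨by linarith [hx.1], by linarith [hx.2]⟩
  -- g is monotone on [0, c]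
  have hgmono : MonotoneOn g (Set.Icc 0 c) := by
    apply monotoneOn_of_deriv_nonneg (convex_Icc 0 c)
    · exact fun x hx => ((gDeriv x (hsub hx)).continuousAt).continuousWithinAt
    · intro x hx
      rw [interior_Icc] at hx
      exact (gDeriv x (hsub ⟨le_of_lt hx.1, le_of_lt hx.2⟩)).differentiableAt.differentiableWithinAt
    · intro x hx
      rw [interior_Icc] at hx
      have hx' : x ∈ Set.Ioo (-1 : ℝ) 1 := hsub ⟨le_of_lt hx.1, le_of_lt hx.2⟩
      rw [(gDeriv x hx').deriv]
      have h1x : (0:ℝ) < 1 + x := by linarith [hx'.1]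
      have h2x : (0:ℝ) < 1 - x := by linarith [hx'.2]
      have heq : 1 / (1 + x) + 1 / (1 - x) - 2 - 2 * x ^ 2 = 2 * x ^ 4 / ((1 + x) * (1 - x)) := by
        field_simp
        ring
      rw [heq]
      positivity
  have hg0 : g 0 = 0 := by simp [hg]
  have hgnonneg : ∀ x ∈ Set.Icc (0 : ℝ) c, 0 ≤ g x := by
    intro x hx
    have := hgmono (Set.left_mem_Icc.mpr h0) hx hx.1
    linarith [this, hg0.symm ▸ this]
  -- f is monotone on [0, c]
  have hfmono : MonotoneOn f (Set.Icc 0 c) := by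
    apply monotoneOn_of_deriv_nonneg (convex_Icc 0 c)
    · exact fun x hx => ((fDeriv x (hsub hx)).continuousAt).continuousWithinAt
    · intro x hx
      rw [interior_Icc] at hx
      exact (fDeriv x (hsub ⟨le_of_lt hx.1, le_of_lt hx.2⟩)).differentiableAt.differentiableWithinAt
    · intro x hx
      rw [interior_Icc] at hx
      have hx' : x ∈ Set.Icc (0:ℝ) c := ⟨le_of_lt hx.1, le_of_lt hx.2⟩
      rw [(fDeriv x (hsub hx')).deriv]
      exact hgnonneg x hx'
  have hf0 : f 0 = 0 := by simp [hf]
  have := hfmono (Set.left_mem_Icc.mpr h0) (Set.right_mem_Icc.mpr h0) h0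
  rw [hf0] at this
  simp only [hf] at this
  linarith

/-- For every `c ∈ (-1,1)` and every real `λ`,
`P_c(λ) = (3/2)(1-λ)² - c² λ + G(c) ≥ 0`, where
`G(c) = (1+c)·ln(1+c) + (1-c)·ln(1-c)`. -/
theorem Pc_nonneg (c : ℝ) (hc : c ∈ Set.Ioo (-1 : ℝ) 1) (l : ℝ) :
    0 ≤ 3 / 2 * (1 - l) ^ 2 - c ^ 2 * l
        + ((1 + c) * Real.log (1 + c) + (1 - c) * Real.log (1 - c)) := by
  obtain ⟨h1, h2⟩ := hc
  have hG : c ^ 2 + c ^ 4 / 6 ≤ (1 + c) * Real.log (1 + c) + (1 - c) * Real.log (1 - c) := by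
    rcases le_or_gt 0 c with h | h
    · exact key c h h2
    · have := key (-c) (by linarith) (by linarith)
      rw [show (1:ℝ) + -c = 1 - c by ring, show (1:ℝ) - -c = 1 + c by ring] at this
      nlinarith [this]
  nlinarith [hG, sq_nonneg (3 * (1 - l) + c ^ 2)]
end

section
/- For every c in the open interval (-1,1), the discriminant of the quadratic polynomial P_c(λ) = (3/2)·λ² - (3+c²)·λ + 3/2 + G(c) satisfies (c²+3)² - 9 - 6·G(c) = -12·∑_{k=2}^{∞} c^{2k+2}/((2k+1)(2k+2)), and in particular (c²+3)² - 9 - 6·G(c) ≤ 0. -/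
open Real

/-- For every `c ∈ (-1,1)`, the discriminant of the quadratic `P_c` satisfies
`(c²+3)² - 9 - 6 G(c) = -12 ∑_{k=2}^∞ c^{2k+2}/((2k+1)(2k+2))`, and in particular
it is `≤ 0`, where `G(c) = (1+c)·ln(1+c) + (1-c)·ln(1-c)`. -/
theorem discriminant_Pc (c : ℝ) (hc : c ∈ Set.Ioo (-1 : ℝ) 1) :
    (c ^ 2 + 3) ^ 2 - 9
        - 6 * ((1 + c) * Real.log (1 + c) + (1 - c) * Real.log (1 - c))
      = -12 * ∑' k : ℕ, c ^ (2 * k + 6) / ((2 * (k : ℝ) + 5) * (2 * (k : ℝ) + 6)) ∧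
    (c ^ 2 + 3) ^ 2 - 9
        - 6 * ((1 + c) * Real.log (1 + c) + (1 - c) * Real.log (1 - c)) ≤ 0 := by
  obtain ⟨hc1, hc2⟩ := hc
  have habs : |c| < 1 := abs_lt.mpr ⟨hc1, hc2⟩
  have habs' : |(-c)| < 1 := by rwa [abs_neg]
  -- series for -log(1-c) and -log(1+c)
  have h1 : HasSum (fun n : ℕ => c ^ (n + 1) / (n + 1)) (-Real.log (1 - c)) :=
    hasSum_pow_div_log_of_abs_lt_one habs
  have h2 : HasSum (fun n : ℕ => (-c) ^ (n + 1) / (n + 1)) (-Real.log (1 + c)) := by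
    have := hasSum_pow_div_log_of_abs_lt_one habs'
    simpa using this
  set G : ℝ := (1 + c) * Real.log (1 + c) + (1 - c) * Real.log (1 - c) with hGdef
  set f : ℕ → ℝ := fun n =>
    -(1 + c) * ((-c) ^ (n + 1) / (n + 1)) + -(1 - c) * (c ^ (n + 1) / (n + 1)) with hf
  have hfG : HasSum f G := by
    have := (h2.mul_left (-(1 + c))).add (h1.mul_left (-(1 - c)))
    convert this using 1
    case e'_3 => rfl
    rw [hGdef]; ring
  -- summability of even and odd parts
  have hsum : Summable f := hfG.summable
  have hse : Summable (fun m : ℕ => f (2 * m)) :=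
    hsum.comp_injective (fun a b h => by omega)
  have hso : Summable (fun m : ℕ => f (2 * m + 1)) :=
    hsum.comp_injective (fun a b h => by omega)
  have hcomb : HasSum (fun m : ℕ => f (2 * m) + f (2 * m + 1)) G := by
    have h3 := hse.hasSum.even_add_odd hso.hasSum
    have h4 := hse.hasSum.add hso.hasSum
    rwa [h3.unique hfG] at h4
  -- rewrite the combined term
  have hterm : ∀ m : ℕ, f (2 * m) + f (2 * m + 1)
      = c ^ (2 * m + 2) / ((2 * (m : ℝ) + 1) * ((m : ℝ) + 1)) := by
    intro m
    have hodd : (-c) ^ (2 * m + 1) = -(c ^ (2 * m + 1)) :=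
      Odd.neg_pow ⟨m, by ring⟩ c
    have heven : (-c) ^ (2 * m + 2) = c ^ (2 * m + 2) :=
      Even.neg_pow ⟨m + 1, by ring⟩ c
    have e1 : (2 * m : ℕ) + 1 = 2 * m + 1 := rfl
    simp only [hf]
    have hp1 : ((2 * m : ℕ) : ℝ) + 1 = 2 * (m : ℝ) + 1 := by push_cast; ring
    have hp2 : ((2 * m + 1 : ℕ) : ℝ) + 1 = 2 * (m : ℝ) + 2 := by push_cast; ring
    rw [show (2 * m : ℕ) + 1 + 1 = 2 * m + 2 from rfl, hodd, heven, hp1, hp2]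
    have hd1 : (2 * (m : ℝ) + 1) ≠ 0 := by positivity
    have hd2 : (2 * (m : ℝ) + 2) ≠ 0 := by positivity
    have hd3 : ((m : ℝ) + 1) ≠ 0 := by positivity
    field_simp
    ring
  have hG : HasSum (fun m : ℕ => c ^ (2 * m + 2) / ((2 * (m : ℝ) + 1) * ((m : ℝ) + 1))) G := by
    rwa [← funext hterm]
  -- split off the first two terms
  have htail : HasSum (fun k : ℕ =>
      c ^ (2 * (k + 2) + 2) / ((2 * ((k + 2 : ℕ) : ℝ) + 1) * (((k + 2 : ℕ) : ℝ) + 1)))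
      (G - (c ^ 2 + c ^ 4 / 6)) := by
    refine (hasSum_nat_add_iff (f := fun m : ℕ =>
      c ^ (2 * m + 2) / ((2 * (m : ℝ) + 1) * ((m : ℝ) + 1))) 2
      (g := G - (c ^ 2 + c ^ 4 / 6))).mpr ?_
    convert hG using 1
    case e'_3 => rfl
    simp [Finset.sum_range_succ]
    ring
  -- relate to the target series
  have hkey : HasSum (fun k : ℕ => c ^ (2 * k + 6) / ((2 * (k : ℝ) + 5) * (2 * (k : ℝ) + 6)))
      ((G - (c ^ 2 + c ^ 4 / 6)) / 2) := by
    have := htail.div_const 2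
    convert this using 2 with k
    case e'_3 => rfl
    have hd1 : (2 * (k : ℝ) + 5) ≠ 0 := by positivity
    have hd2 : (2 * (k : ℝ) + 6) ≠ 0 := by positivity
    have hd3 : ((k : ℝ) + 3) ≠ 0 := by positivity
    push_cast
    rw [show 2 * (k + 2) + 2 = 2 * k + 6 by ring, show 2 * ((k : ℝ) + 2) + 1 = 2 * (k : ℝ) + 5 by ring,
      show ((k : ℝ) + 2) + 1 = (k : ℝ) + 3 by ring]
    field_simp
    try ring
    try tauto
  have hts : (∑' k : ℕ, c ^ (2 * k + 6) / ((2 * (k : ℝ) + 5) * (2 * (k : ℝ) + 6)))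
      = (G - (c ^ 2 + c ^ 4 / 6)) / 2 := hkey.tsum_eq
  constructor
  · rw [hts]; ring
  · have hnonneg : 0 ≤ ∑' k : ℕ, c ^ (2 * k + 6) / ((2 * (k : ℝ) + 5) * (2 * (k : ℝ) + 6)) := by
      apply tsum_nonneg
      intro k
      apply div_nonneg
      · exact Even.pow_nonneg ⟨k + 3, by ring⟩ c
      · positivity
    have heq : (c ^ 2 + 3) ^ 2 - 9 - 6 * G
        = -12 * ∑' k : ℕ, c ^ (2 * k + 6) / ((2 * (k : ℝ) + 5) * (2 * (k : ℝ) + 6)) := by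
      rw [hts]; ring
    rw [heq]
    nlinarith
end

section
/- For every c in the open interval (-1,1), setting λ* = c²/3 + 1, one has P_c(λ*) = 2·∑_{k=2}^{∞} c^{2k+2}/((2k+1)(2k+2)) ≥ 0, and P_c(λ) ≥ P_c(λ*) for every real λ; that is, the minimum of P_c over ℝ is attained at λ* and is nonnegative. -/
open Real

lemma hasSum_G (c : ℝ) (hc : c ∈ Set.Ioo (-1 : ℝ) 1) :
    HasSum (fun k : ℕ => 2 * c ^ (2 * k + 2) / ((2 * (k : ℝ) + 1) * (2 * (k : ℝ) + 2)))
      ((1 + c) * Real.log (1 + c) + (1 - c) * Real.log (1 - c)) := by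
  obtain ⟨h1, h2⟩ := hc
  have habs : |c| < 1 := abs_lt.2 ⟨h1, h2⟩
  have habs2 : |c ^ 2| < 1 := by
    rw [abs_pow]
    calc |c| ^ 2 ≤ |c| * 1 := by nlinarith [abs_nonneg c]
    _ < 1 := by nlinarith [abs_nonneg c]
  have hA := (hasSum_log_sub_log_of_abs_lt_one habs).mul_left c
  have hB := hasSum_pow_div_log_of_abs_lt_one habs2
  have hAB := hA.sub hB
  have hlog : Real.log (1 - c ^ 2) = Real.log (1 + c) + Real.log (1 - c) := by
    have : (1 : ℝ) - c ^ 2 = (1 + c) * (1 - c) := by ring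
    rw [this, Real.log_mul (by linarith) (by linarith)]
  have heq : (fun k : ℕ => c * (2 * (1 / (2 * (k : ℝ) + 1)) * c ^ (2 * k + 1))
      - (c ^ 2) ^ (k + 1) / ((k : ℝ) + 1))
      = fun k : ℕ => 2 * c ^ (2 * k + 2) / ((2 * (k : ℝ) + 1) * (2 * (k : ℝ) + 2)) := by
    funext k
    have hk1 : (2 * (k : ℝ) + 1) ≠ 0 := by positivity
    have hk2 : (2 * (k : ℝ) + 2) ≠ 0 := by positivity
    have hk3 : ((k : ℝ) + 1) ≠ 0 := by positivity
    have hp : (c ^ 2) ^ (k + 1) = c ^ (2 * k + 2) := by rw [← pow_mul]; ring_nf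
    rw [hp]
    have hp2 : c ^ (2 * k + 2) = c * c ^ (2 * k + 1) := by rw [← pow_succ']
    field_simp
    rw [hp2]
    ring
  rw [heq] at hAB
  have hval : (1 + c) * Real.log (1 + c) + (1 - c) * Real.log (1 - c)
      = c * (Real.log (1 + c) - Real.log (1 - c)) - -Real.log (1 - c ^ 2) := by
    rw [hlog]
    ring
  rw [hval]
  exact hAB

/-- For every `c ∈ (-1,1)`, setting `λ* = c²/3 + 1`, one has
`P_c(λ*) = 2 ∑_{k=2}^∞ c^{2k+2}/((2k+1)(2k+2)) ≥ 0` and `P_c(λ) ≥ P_c(λ*)` for all real `λ`,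
where `P_c(λ) = (3/2)(1-λ)² - c² λ + G(c)` and `G(c) = (1+c)·ln(1+c) + (1-c)·ln(1-c)`. -/
theorem Pc_min_at_lambda_star (c : ℝ) (hc : c ∈ Set.Ioo (-1 : ℝ) 1) :
    (3 / 2 * (1 - (c ^ 2 / 3 + 1)) ^ 2 - c ^ 2 * (c ^ 2 / 3 + 1)
          + ((1 + c) * Real.log (1 + c) + (1 - c) * Real.log (1 - c))
        = 2 * ∑' k : ℕ, c ^ (2 * k + 6) / ((2 * (k : ℝ) + 5) * (2 * (k : ℝ) + 6))) ∧
    (0 ≤ 3 / 2 * (1 - (c ^ 2 / 3 + 1)) ^ 2 - c ^ 2 * (c ^ 2 / 3 + 1)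
          + ((1 + c) * Real.log (1 + c) + (1 - c) * Real.log (1 - c))) ∧
    (∀ l : ℝ,
      3 / 2 * (1 - (c ^ 2 / 3 + 1)) ^ 2 - c ^ 2 * (c ^ 2 / 3 + 1)
          + ((1 + c) * Real.log (1 + c) + (1 - c) * Real.log (1 - c))
        ≤ 3 / 2 * (1 - l) ^ 2 - c ^ 2 * l
          + ((1 + c) * Real.log (1 + c) + (1 - c) * Real.log (1 - c))) := by
  set G := (1 + c) * Real.log (1 + c) + (1 - c) * Real.log (1 - c) with hG
  have hS := hasSum_G c hc
  set f := fun k : ℕ => 2 * c ^ (2 * k + 2) / ((2 * (k : ℝ) + 1) * (2 * (k : ℝ) + 2)) with hf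
  have hshift : HasSum (fun n : ℕ => f (n + 2)) (G - ∑ i ∈ Finset.range 2, f i) := by
    apply (hasSum_nat_add_iff 2).2
    rwa [sub_add_cancel]
  have hsum2 : ∑ i ∈ Finset.range 2, f i = c ^ 2 + c ^ 4 / 6 := by
    simp [hf, Finset.sum_range_succ]
    norm_num
    ring
  rw [hsum2] at hshift
  have heq2 : (fun n : ℕ => f (n + 2))
      = fun n : ℕ => 2 * (c ^ (2 * n + 6) / ((2 * (n : ℝ) + 5) * (2 * (n : ℝ) + 6))) := by
    funext n
    simp only [hf]
    push_cast
    rw [show 2 * (n + 2) + 2 = 2 * n + 6 by ring]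
    ring_nf
  rw [heq2] at hshift
  have hdiv := hshift.div_const 2
  simp only [mul_div_assoc, mul_div_cancel_left₀ _ (two_ne_zero (α := ℝ))] at hdiv
  have htsum : ∑' k : ℕ, c ^ (2 * k + 6) / ((2 * (k : ℝ) + 5) * (2 * (k : ℝ) + 6))
      = (G - (c ^ 2 + c ^ 4 / 6)) / 2 := hdiv.tsum_eq
  have hnn : 0 ≤ ∑' k : ℕ, c ^ (2 * k + 6) / ((2 * (k : ℝ) + 5) * (2 * (k : ℝ) + 6)) := by
    apply tsum_nonneg
    intro k
    have : c ^ (2 * k + 6) = (c ^ 2) ^ (k + 3) := by rw [← pow_mul]; ring_nf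
    rw [this]
    positivity
  refine ⟨?_, ?_, ?_⟩
  · rw [htsum]; ring
  · have : 3 / 2 * (1 - (c ^ 2 / 3 + 1)) ^ 2 - c ^ 2 * (c ^ 2 / 3 + 1) + G
        = 2 * ∑' k : ℕ, c ^ (2 * k + 6) / ((2 * (k : ℝ) + 5) * (2 * (k : ℝ) + 6)) := by
      rw [htsum]; ring
    rw [this]; linarith
  · intro l; nlinarith [sq_nonneg (l - 1 - c ^ 2 / 3)]
end

section
/- For every c in the open interval (-1,1), one has (1+c)·ln(1+c) + (1-c)·ln(1-c) ≥ c² + c⁴/6. -/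
open Real Set

private lemma hasDerivAt_g (x : ℝ) (hx1 : (-1:ℝ) < x) (hx2 : x < 1) :
    HasDerivAt (fun y : ℝ => Real.log (1 + y) - Real.log (1 - y) - 2 * y - 2 * y ^ 3 / 3)
      (1 / (1 + x) + 1 / (1 - x) - 2 - 2 * x ^ 2) x := by
  have h1 : (0:ℝ) < 1 + x := by linarith
  have h2 : (0:ℝ) < 1 - x := by linarith
  have d1 : HasDerivAt (fun y : ℝ => Real.log (1 + y)) (1 / (1 + x)) x := by
    have := (Real.hasDerivAt_log h1.ne').comp x ((hasDerivAt_id x).const_add 1)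
    exact this.congr_deriv (by simp [one_div])
  have d2 : HasDerivAt (fun y : ℝ => Real.log (1 - y)) (-(1 / (1 - x))) x := by
    have hlin : HasDerivAt (fun y : ℝ => 1 - y) (-1) x := by
      simpa using ((hasDerivAt_id x).const_sub 1)
    have := (Real.hasDerivAt_log h2.ne').comp x hlin
    exact this.congr_deriv (by simp [one_div])
  have d3 : HasDerivAt (fun y : ℝ => 2 * y) 2 x := by
    simpa using (hasDerivAt_id x).const_mul 2
  have d4 : HasDerivAt (fun y : ℝ => 2 * y ^ 3 / 3) (2 * x ^ 2) x := by
    have := ((hasDerivAt_pow 3 x).const_mul 2).div_const 3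
    exact this.congr_deriv (by ring)
  have := ((d1.sub d2).sub d3).sub d4
  exact this.congr_deriv (by ring)

private lemma g_nonneg (x : ℝ) (h0 : 0 ≤ x) (h1 : x < 1) :
    2 * x + 2 * x ^ 3 / 3 ≤ Real.log (1 + x) - Real.log (1 - x) := by
  set g : ℝ → ℝ := fun y => Real.log (1 + y) - Real.log (1 - y) - 2 * y - 2 * y ^ 3 / 3 with hg
  have hmono : MonotoneOn g (Ico (0:ℝ) 1) := by
    apply monotoneOn_of_deriv_nonneg (convex_Ico 0 1)
    · intro y hy
      exact (hasDerivAt_g y (by linarith [hy.1]) hy.2).continuousAt.continuousWithinAt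
    · intro y hy
      rw [interior_Ico] at hy
      exact (hasDerivAt_g y (by linarith [hy.1]) hy.2).differentiableAt.differentiableWithinAt
    · intro y hy
      rw [interior_Ico] at hy
      obtain ⟨hy0, hy1⟩ := hy
      rw [(hasDerivAt_g y (by linarith) hy1).deriv]
      have hp1 : (0:ℝ) < 1 + y := by linarith
      have hp2 : (0:ℝ) < 1 - y := by linarith
      have : 1 / (1 + y) + 1 / (1 - y) = 2 / ((1 + y) * (1 - y)) := by
        field_simp; ring
      rw [this, sub_nonneg, le_sub_iff_add_le, le_div_iff₀ (by positivity)]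
      nlinarith [sq_nonneg (y ^ 2)]
  have h00 : g 0 = 0 := by simp [hg]
  have := hmono (show (0:ℝ) ∈ Ico (0:ℝ) 1 by constructor <;> norm_num)
    (show x ∈ Ico (0:ℝ) 1 from ⟨h0, h1⟩) h0
  rw [h00] at this
  simp only [hg] at this
  linarith

private lemma hasDerivAt_f (x : ℝ) (hx1 : (-1:ℝ) < x) (hx2 : x < 1) :
    HasDerivAt (fun y : ℝ => (1 + y) * Real.log (1 + y) + (1 - y) * Real.log (1 - y)
        - (y ^ 2 + y ^ 4 / 6))
      (Real.log (1 + x) - Real.log (1 - x) - 2 * x - 2 * x ^ 3 / 3) x := by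
  have h1 : (0:ℝ) < 1 + x := by linarith
  have h2 : (0:ℝ) < 1 - x := by linarith
  have dl1 : HasDerivAt (fun y : ℝ => Real.log (1 + y)) (1 / (1 + x)) x := by
    have := (Real.hasDerivAt_log h1.ne').comp x ((hasDerivAt_id x).const_add 1)
    exact this.congr_deriv (by simp [one_div])
  have dl2 : HasDerivAt (fun y : ℝ => Real.log (1 - y)) (-(1 / (1 - x))) x := by
    have hlin : HasDerivAt (fun y : ℝ => 1 - y) (-1) x := by
      simpa using ((hasDerivAt_id x).const_sub 1)
    have := (Real.hasDerivAt_log h2.ne').comp x hlin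
    exact this.congr_deriv (by simp [one_div])
  have da : HasDerivAt (fun y : ℝ => (1 + y) * Real.log (1 + y))
      (1 * Real.log (1 + x) + (1 + x) * (1 / (1 + x))) x :=
    ((hasDerivAt_id x).const_add 1).mul dl1
  have db : HasDerivAt (fun y : ℝ => (1 - y) * Real.log (1 - y))
      ((-1) * Real.log (1 - x) + (1 - x) * (-(1 / (1 - x)))) x := by
    have hlin : HasDerivAt (fun y : ℝ => 1 - y) (-1) x := by
      simpa using ((hasDerivAt_id x).const_sub 1)
    exact hlin.mul dl2
  have dc : HasDerivAt (fun y : ℝ => y ^ 2 + y ^ 4 / 6) (2 * x + 4 * x ^ 3 / 6) x := by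
    have := (hasDerivAt_pow 2 x).add ((hasDerivAt_pow 4 x).div_const 6)
    exact this.congr_deriv (by ring)
  have := (da.add db).sub dc
  refine this.congr_deriv ?_
  have e1 : (1 + x) * (1 / (1 + x)) = 1 := by field_simp
  have e2 : (1 - x) * (-(1 / (1 - x))) = -1 := by field_simp
  rw [e1, e2]
  ring

/-- For every `c ∈ (-1,1)`, `(1+c)·ln(1+c) + (1-c)·ln(1-c) ≥ c² + c⁴/6`. -/
theorem G_lower_bound (c : ℝ) (hc : c ∈ Set.Ioo (-1 : ℝ) 1) :
    c ^ 2 + c ^ 4 / 6 ≤ (1 + c) * Real.log (1 + c) + (1 - c) * Real.log (1 - c) := by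
  obtain ⟨hl, hr⟩ := hc
  rcases le_or_gt 0 c with h | h
  · exact key c h hr
  · have hk := key (-c) (by linarith) (by linarith)
    rw [show (1:ℝ) + -c = 1 - c from by ring, show (1:ℝ) - -c = 1 + c from by ring,
      show (-c) ^ 2 = c ^ 2 from by ring, show (-c) ^ 4 = c ^ 4 from by ring] at hk
    linarith
end
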